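/- Let m ≥ 1, K ≥ 2, q ≥ 2 be integers and suppose nonnegative reals P(k₁,…,k_m) indexed by increasing tuples satisfy the recursive bound: P(k₁,…,k_m) ≤ Σ_{j=1}^m b(k_j - k₁) · P(k_{j+1},…,k_m), where P(empty tuple) = 1 and b(d) ≤ (1/2)·K^{-2qd - q} for all d ≥ 0. Then P(k₁,…,k_m) ≤ K^{-qm} for every increasing tuple k₁ < k₂ < ⋯ < k_m. -/

import Mathlib

lemma getD_ge_head_add : ∀ (l : List ℕ) (k : ℕ), (k :: l).Chain' (· < ·) →
    ∀ j, j < (k :: l).length → k + j ≤ (k :: l).getD j 0 := by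
  intro l
  induction l with
  | nil =>
    intro k _ j hj
    have : j = 0 := by simp at hj; omega
    subst this
    simp
  | cons a t ih =>
    intro k hc j hj
    match j with
    | 0 => simp
    | j + 1 =>
      have hc' := (List.isChain_cons_cons.mp hc)
      have h1 : a + j ≤ (a :: t).getD j 0 := ih a hc'.2 j (by simpa using hj)
      have hka : k < a := hc'.1
      simp only [List.getD_cons_succ] at *
      omega

theorem stmt_16 (K q : ℕ) (hK : 2 ≤ K) (hq : 2 ≤ q)
    (P : List ℕ → ℝ) (hPnonneg : ∀ l, 0 ≤ P l) (hPnil : P [] = 1)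
    (b : ℕ → ℝ) (hbnonneg : ∀ d, 0 ≤ b d)
    (hb : ∀ d : ℕ, b d ≤ (1/2) * ((K : ℝ) ^ (2 * q * d + q))⁻¹)
    (hrec : ∀ (k : ℕ) (l : List ℕ), (k :: l).Chain' (· < ·) →
      P (k :: l) ≤ ∑ j ∈ Finset.range (k :: l).length,
        b ((k :: l).getD j 0 - k) * P ((k :: l).drop (j+1))) :
    ∀ l : List ℕ, l.Chain' (· < ·) → P l ≤ ((K : ℝ) ^ (q * l.length))⁻¹ := by
  have hK1 : (1 : ℝ) < (K : ℝ) := by exact_mod_cast Nat.lt_of_lt_of_le one_lt_two hK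
  have hKpos : (0 : ℝ) < (K : ℝ) := lt_trans one_pos hK1
  have hKq : (2 : ℝ) ≤ (K : ℝ) ^ q := by
    calc (2 : ℝ) ≤ (K : ℝ) := by exact_mod_cast hK
    _ = (K : ℝ) ^ 1 := (pow_one _).symm
    _ ≤ (K : ℝ) ^ q := pow_le_pow_right₀ hK1.le (by omega)
  have hKqinv : ((K : ℝ) ^ q)⁻¹ ≤ 1 / 2 := by
    rw [one_div]
    exact inv_anti₀ two_pos hKq
  suffices H : ∀ n (l : List ℕ), l.length = n → l.Chain' (· < ·) →
      P l ≤ ((K : ℝ) ^ (q * l.length))⁻¹ by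
    intro l hl; exact H l.length l rfl hl
  intro n
  induction n using Nat.strong_induction_on with
  | _ n ih =>
    intro l hlen hchain
    match l, hlen with
    | [], rfl => simp [hPnil]
    | (k :: rest), rfl =>
      set m := (k :: rest).length with hm
      have hm' : m = rest.length + 1 := rfl
      have hmain := hrec k rest hchain
      have hterm : ∀ j ∈ Finset.range m,
          b ((k :: rest).getD j 0 - k) * P ((k :: rest).drop (j+1)) ≤
          ((K : ℝ) ^ (q * m))⁻¹ * ((1/2) * (1/2) ^ j) := by
        intro j hj
        rw [Finset.mem_range] at hj
        have hd : j ≤ (k :: rest).getD j 0 - k := by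
          have := getD_ge_head_add rest k hchain j hj
          omega
        have hb1 : b ((k :: rest).getD j 0 - k) ≤
            (1/2) * ((K : ℝ) ^ (2 * q * j + q))⁻¹ := by
          refine (hb _).trans ?_
          have hexp : (K : ℝ) ^ (2 * q * j + q) ≤
              (K : ℝ) ^ (2 * q * ((k :: rest).getD j 0 - k) + q) :=
            pow_le_pow_right₀ hK1.le (by nlinarith)
          have := inv_anti₀ (by positivity) hexp
          linarith
        have hdropeq : (k :: rest).drop (j+1) = rest.drop j := rfl
        have hdl : ((k :: rest).drop (j+1)).length = m - 1 - j := by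
          simp [hdropeq, hm']
        have hP1 : P ((k :: rest).drop (j+1)) ≤ ((K : ℝ) ^ (q * (m - 1 - j)))⁻¹ := by
          have := ih (m - 1 - j) (by omega) ((k :: rest).drop (j+1)) hdl
            (hchain.drop (j+1))
          rwa [hdl] at this
        obtain ⟨t, ht1, ht2⟩ : ∃ t, m - 1 - j = t ∧ m = t + j + 1 :=
          ⟨m - 1 - j, rfl, by omega⟩
        have hexp2 : 2 * q * j + q + q * (m - 1 - j) = q * m + q * j := by
          rw [ht1, ht2]; ring
        calc b ((k :: rest).getD j 0 - k) * P ((k :: rest).drop (j+1))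
            ≤ ((1/2) * ((K : ℝ) ^ (2 * q * j + q))⁻¹) * ((K : ℝ) ^ (q * (m - 1 - j)))⁻¹ := by
              apply mul_le_mul hb1 hP1 (hPnonneg _)
              positivity
          _ = (1/2) * ((K : ℝ) ^ (q * m))⁻¹ * (((K : ℝ) ^ q)⁻¹) ^ j := by
              rw [mul_assoc, ← mul_inv, ← pow_add, hexp2, pow_add,
                pow_mul (K : ℝ) q j, mul_inv]
              rw [inv_pow, ← mul_assoc]
          _ ≤ (1/2) * ((K : ℝ) ^ (q * m))⁻¹ * (1/2) ^ j := by
              have h2 : (0:ℝ) ≤ (1/2) * ((K : ℝ) ^ (q * m))⁻¹ := by positivity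
              exact mul_le_mul_of_nonneg_left
                (pow_le_pow_left₀ (by positivity) hKqinv j) h2
          _ = ((K : ℝ) ^ (q * m))⁻¹ * ((1/2) * (1/2) ^ j) := by ring
      have hsum : ∑ j ∈ Finset.range m,
          ((K : ℝ) ^ (q * m))⁻¹ * ((1/2) * (1/2) ^ j) ≤ ((K : ℝ) ^ (q * m))⁻¹ := by
        rw [← Finset.mul_sum, ← Finset.mul_sum]
        have hg := sum_geometric_two_le m
        have h0 : (0:ℝ) ≤ ((K : ℝ) ^ (q * m))⁻¹ := by positivity
        calc ((K : ℝ) ^ (q * m))⁻¹ * ((1/2) * ∑ j ∈ Finset.range m, (1/2:ℝ) ^ j)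
            ≤ ((K : ℝ) ^ (q * m))⁻¹ * ((1/2) * 2) := by
              apply mul_le_mul_of_nonneg_left _ h0
              apply mul_le_mul_of_nonneg_left hg (by norm_num)
          _ = ((K : ℝ) ^ (q * m))⁻¹ := by ring
      exact hmain.trans ((Finset.sum_le_sum hterm).trans hsum)
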